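/- Let m ≥ 1 and let y, z, y', z' be vertices of the doubled Odd graph 2.O_{m+1} (i.e., subsets of S of cardinality m or m+1). Then there exists a permutation σ of S with σ(x0) = x0 (setwise), σ(y) = y' and σ(z) = z' if and only if |y| = |y'|, |z| = |z'| and ρ(y,z) = ρ(y',z'). In other words, the orbits of the setwise stabilizer of x0 in Sym(S) acting diagonally on X × X are exactly the nonempty sets { (y,z) ∈ X × X : |y| = a, |z| = b, ρ(y,z) = q } for (a,b) ∈ {(m,m),(m,m+1),(m+1,m),(m+1,m+1)} and quadruples q. -/
import Mathlib


/-- The quadruple `ρ(y,z) = (|x0∩y|, |x0∩z|, |y∩z|, |x0∩y∩z|)`, with entries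
viewed as integers. -/
def rho {n : ℕ} (x0 y z : Finset (Fin n)) : ℤ × ℤ × ℤ × ℤ :=
  (((x0 ∩ y).card : ℤ), ((x0 ∩ z).card : ℤ), ((y ∩ z).card : ℤ),
    ((x0 ∩ y ∩ z).card : ℤ))

namespace Stmt7

open Finset

variable {n : ℕ}

/-- Explicit formula for the size of each Venn atom of three sets. -/
def F (n : ℕ) (A B C : Finset (Fin n)) : Bool × Bool × Bool → ℤ := fun b =>
  match b with
  | (true, true, true) => ((A ∩ B ∩ C).card : ℤ)
  | (true, true, false) => ((A ∩ B).card : ℤ) - ((A ∩ B ∩ C).card : ℤ)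
  | (true, false, true) => ((A ∩ C).card : ℤ) - ((A ∩ B ∩ C).card : ℤ)
  | (false, true, true) => ((B ∩ C).card : ℤ) - ((A ∩ B ∩ C).card : ℤ)
  | (true, false, false) => ((A.card : ℤ)) - ((A ∩ B).card : ℤ) - ((A ∩ C).card : ℤ)
      + ((A ∩ B ∩ C).card : ℤ)
  | (false, true, false) => ((B.card : ℤ)) - ((A ∩ B).card : ℤ) - ((B ∩ C).card : ℤ)
      + ((A ∩ B ∩ C).card : ℤ)
  | (false, false, true) => ((C.card : ℤ)) - ((A ∩ C).card : ℤ) - ((B ∩ C).card : ℤ)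
      + ((A ∩ B ∩ C).card : ℤ)
  | (false, false, false) => (n : ℤ) - (A.card : ℤ) - (B.card : ℤ) - (C.card : ℤ)
      + ((A ∩ B).card : ℤ) + ((A ∩ C).card : ℤ) + ((B ∩ C).card : ℤ)
      - ((A ∩ B ∩ C).card : ℤ)

lemma card_pat (A B C : Finset (Fin n)) (b : Bool × Bool × Bool) :
    (((univ : Finset (Fin n)).filter
        (fun a => (decide (a ∈ A), decide (a ∈ B), decide (a ∈ C)) = b)).card : ℤ)
      = F n A B C b := by
  obtain ⟨b1, b2, b3⟩ := b
  have eACB : (A ∩ C) ∩ B = A ∩ B ∩ C := by ext a; simp; try tauto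
  have eBCA : (B ∩ C) ∩ A = A ∩ B ∩ C := by ext a; simp; try tauto
  have eABAC : (A ∩ B) ∩ (A ∩ C) = A ∩ B ∩ C := by ext a; simp; try tauto
  have eBABC : (B ∩ A) ∩ (B ∩ C) = A ∩ B ∩ C := by ext a; simp; try tauto
  have eCACB : (C ∩ A) ∩ (C ∩ B) = A ∩ B ∩ C := by ext a; simp; try tauto
  have eACBC : (A ∩ C) ∩ (B ∩ C) = A ∩ B ∩ C := by ext a; simp; try tauto
  have eBA : (B ∩ A).card = (A ∩ B).card := by rw [inter_comm]
  have eCA : (C ∩ A).card = (A ∩ C).card := by rw [inter_comm]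
  have eCB : (C ∩ B).card = (B ∩ C).card := by rw [inter_comm]
  cases b1 <;> cases b2 <;> cases b3
  -- (false, false, false)
  · have hfil : ((univ : Finset (Fin n)).filter
        (fun a => (decide (a ∈ A), decide (a ∈ B), decide (a ∈ C)) = (false, false, false)))
        = univ \ (A ∪ B ∪ C) := by ext a; simp; try tauto
    have r0 : ((univ : Finset (Fin n)) \ (A ∪ B ∪ C)).card = n - (A ∪ B ∪ C).card := by
      rw [card_sdiff_of_subset (subset_univ _), card_univ, Fintype.card_fin]
    have ru : (A ∪ B ∪ C).card ≤ n := by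
      simpa using card_le_card (subset_univ (A ∪ B ∪ C))
    have r1 : (A ∪ B ∪ C).card + ((A ∪ B) ∩ C).card = (A ∪ B).card + C.card :=
      card_union_add_card_inter _ _
    have r2 : (A ∪ B).card + (A ∩ B).card = A.card + B.card := card_union_add_card_inter _ _
    have r3 : (A ∪ B) ∩ C = (A ∩ C) ∪ (B ∩ C) := union_inter_distrib_right _ _ _
    rw [r3] at r1
    have r4 : ((A ∩ C) ∪ (B ∩ C)).card + (A ∩ B ∩ C).card
        = (A ∩ C).card + (B ∩ C).card := by
      rw [← eACBC]; exact card_union_add_card_inter _ _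
    rw [hfil, r0]
    simp only [F]
    omega
  -- (false, false, true)
  · have hfil : ((univ : Finset (Fin n)).filter
        (fun a => (decide (a ∈ A), decide (a ∈ B), decide (a ∈ C)) = (false, false, true)))
        = C \ (A ∪ B) := by ext a; simp; try tauto
    have r1 : (C \ (A ∪ B)).card + (C ∩ (A ∪ B)).card = C.card := card_sdiff_add_card_inter _ _
    rw [inter_union_distrib_left] at r1
    have r3 : ((C ∩ A) ∪ (C ∩ B)).card + (A ∩ B ∩ C).card
        = (C ∩ A).card + (C ∩ B).card := by
      rw [← eCACB]; exact card_union_add_card_inter _ _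
    rw [hfil]
    simp only [F]
    omega
  -- (false, true, false)
  · have hfil : ((univ : Finset (Fin n)).filter
        (fun a => (decide (a ∈ A), decide (a ∈ B), decide (a ∈ C)) = (false, true, false)))
        = B \ (A ∪ C) := by ext a; simp; try tauto
    have r1 : (B \ (A ∪ C)).card + (B ∩ (A ∪ C)).card = B.card := card_sdiff_add_card_inter _ _
    rw [inter_union_distrib_left] at r1
    have r3 : ((B ∩ A) ∪ (B ∩ C)).card + (A ∩ B ∩ C).card
        = (B ∩ A).card + (B ∩ C).card := by
      rw [← eBABC]; exact card_union_add_card_inter _ _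
    rw [hfil]
    simp only [F]
    omega
  -- (false, true, true)
  · have hfil : ((univ : Finset (Fin n)).filter
        (fun a => (decide (a ∈ A), decide (a ∈ B), decide (a ∈ C)) = (false, true, true)))
        = (B ∩ C) \ A := by ext a; simp; try tauto
    have r1 : ((B ∩ C) \ A).card + (A ∩ B ∩ C).card = (B ∩ C).card := by
      rw [← eBCA]; exact card_sdiff_add_card_inter _ _
    rw [hfil]
    simp only [F]
    omega
  -- (true, false, false)
  · have hfil : ((univ : Finset (Fin n)).filter
        (fun a => (decide (a ∈ A), decide (a ∈ B), decide (a ∈ C)) = (true, false, false)))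
        = A \ (B ∪ C) := by ext a; simp; try tauto
    have r1 : (A \ (B ∪ C)).card + (A ∩ (B ∪ C)).card = A.card := card_sdiff_add_card_inter _ _
    rw [inter_union_distrib_left] at r1
    have r3 : ((A ∩ B) ∪ (A ∩ C)).card + (A ∩ B ∩ C).card
        = (A ∩ B).card + (A ∩ C).card := by
      rw [← eABAC]; exact card_union_add_card_inter _ _
    rw [hfil]
    simp only [F]
    omega
  -- (true, false, true)
  · have hfil : ((univ : Finset (Fin n)).filter
        (fun a => (decide (a ∈ A), decide (a ∈ B), decide (a ∈ C)) = (true, false, true)))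
        = (A ∩ C) \ B := by ext a; simp; try tauto
    have r1 : ((A ∩ C) \ B).card + (A ∩ B ∩ C).card = (A ∩ C).card := by
      rw [← eACB]; exact card_sdiff_add_card_inter _ _
    rw [hfil]
    simp only [F]
    omega
  -- (true, true, false)
  · have hfil : ((univ : Finset (Fin n)).filter
        (fun a => (decide (a ∈ A), decide (a ∈ B), decide (a ∈ C)) = (true, true, false)))
        = (A ∩ B) \ C := by ext a; simp; try tauto
    have r1 : ((A ∩ B) \ C).card + (A ∩ B ∩ C).card = (A ∩ B).card :=
      card_sdiff_add_card_inter _ _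
    rw [hfil]
    simp only [F]
    omega
  -- (true, true, true)
  · have hfil : ((univ : Finset (Fin n)).filter
        (fun a => (decide (a ∈ A), decide (a ∈ B), decide (a ∈ C)) = (true, true, true)))
        = A ∩ B ∩ C := by ext a; simp; try tauto
    rw [hfil]
    simp only [F]

lemma exists_perm {α β : Type*} [Fintype α] [DecidableEq α] [DecidableEq β]
    (p q : α → β)
    (h : ∀ b, ((univ : Finset α).filter (fun a => p a = b)).card
            = ((univ : Finset α).filter (fun a => q a = b)).card) :
    ∃ σ : Equiv.Perm α, ∀ a, q (σ a) = p a := by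
  have e : ∀ b : β, { a // p a = b } ≃ { a // q a = b } := fun b => by
    apply Fintype.equivOfCardEq
    simp only [Fintype.card_subtype]
    exact h b
  refine ⟨(Equiv.sigmaFiberEquiv p).symm.trans
    ((Equiv.sigmaCongrRight e).trans (Equiv.sigmaFiberEquiv q)), fun a => ?_⟩
  exact (e (p a) ⟨a, rfl⟩).2

end Stmt7

open Finset Stmt7 in
theorem stmt_7 (m : ℕ) (hm : 1 ≤ m) (x0 : Finset (Fin (2*m+1))) (hx0 : x0.card = m)
    (y z y' z' : Finset (Fin (2*m+1)))
    (hy : y.card = m ∨ y.card = m+1) (hz : z.card = m ∨ z.card = m+1)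
    (hy' : y'.card = m ∨ y'.card = m+1) (hz' : z'.card = m ∨ z'.card = m+1) :
    (∃ σ : Equiv.Perm (Fin (2*m+1)),
        x0.image σ = x0 ∧ y.image σ = y' ∧ z.image σ = z') ↔
      (y.card = y'.card ∧ z.card = z'.card ∧ rho x0 y z = rho x0 y' z') := by
  constructor
  · rintro ⟨σ, h0, h1, h2⟩
    have inj := σ.injective
    refine ⟨?_, ?_, ?_⟩
    · rw [← h1, card_image_of_injective _ inj]
    · rw [← h2, card_image_of_injective _ inj]
    · have i1 : x0 ∩ y' = (x0 ∩ y).image σ := by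
        rw [Finset.image_inter _ _ inj, h0, h1]
      have i2 : x0 ∩ z' = (x0 ∩ z).image σ := by
        rw [Finset.image_inter _ _ inj, h0, h2]
      have i3 : y' ∩ z' = (y ∩ z).image σ := by
        rw [Finset.image_inter _ _ inj, h1, h2]
      have i4 : x0 ∩ y' ∩ z' = (x0 ∩ y ∩ z).image σ := by
        rw [Finset.image_inter _ _ inj, Finset.image_inter _ _ inj, h0, h1, h2]
      unfold rho
      rw [i4, i1, i2, i3, card_image_of_injective _ inj, card_image_of_injective _ inj,
        card_image_of_injective _ inj, card_image_of_injective _ inj]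
  · rintro ⟨hcy, hcz, hr⟩
    simp only [rho, Prod.mk.injEq, Nat.cast_inj] at hr
    obtain ⟨h1, h2, h3, h4⟩ := hr
    have key : ∀ b, ((univ : Finset (Fin (2*m+1))).filter
          (fun a => (decide (a ∈ x0), decide (a ∈ y), decide (a ∈ z)) = b)).card
        = ((univ : Finset (Fin (2*m+1))).filter
          (fun a => (decide (a ∈ x0), decide (a ∈ y'), decide (a ∈ z')) = b)).card := by
      intro b
      have c1 := card_pat x0 y z b
      have c2 := card_pat x0 y' z' b
      have hF : F (2*m+1) x0 y z b = F (2*m+1) x0 y' z' b := by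
        obtain ⟨b1, b2, b3⟩ := b
        cases b1 <;> cases b2 <;> cases b3 <;> simp only [F] <;> omega
      have hcast : (((univ : Finset (Fin (2*m+1))).filter
          (fun a => (decide (a ∈ x0), decide (a ∈ y), decide (a ∈ z)) = b)).card : ℤ)
          = (((univ : Finset (Fin (2*m+1))).filter
          (fun a => (decide (a ∈ x0), decide (a ∈ y'), decide (a ∈ z')) = b)).card : ℤ) := by
        rw [c1, c2, hF]
      exact_mod_cast hcast
    obtain ⟨σ, hσ⟩ := exists_perm _ _ key
    have hmem : ∀ a : Fin (2*m+1),
        (σ a ∈ x0 ↔ a ∈ x0) ∧ (σ a ∈ y' ↔ a ∈ y) ∧ (σ a ∈ z' ↔ a ∈ z) := by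
      intro a
      have := hσ a
      simp only [Prod.mk.injEq, decide_eq_decide] at this
      tauto
    have himg : ∀ (s t : Finset (Fin (2*m+1))), (∀ a, σ a ∈ t ↔ a ∈ s) → s.image σ = t := by
      intro s t h
      ext b
      simp only [mem_image]
      constructor
      · rintro ⟨a, ha, rfl⟩; exact (h a).2 ha
      · intro hb
        exact ⟨σ.symm b, (h (σ.symm b)).1 (by rw [σ.apply_symm_apply]; exact hb),
          σ.apply_symm_apply b⟩
    exact ⟨σ, himg _ _ (fun a => (hmem a).1), himg _ _ (fun a => (hmem a).2.1),
      himg _ _ (fun a => (hmem a).2.2)⟩
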